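/- Let δ_0, δ_1, ..., δ_m be points off a locally finite hyperplane arrangement, forming a 'positive path' (each step crossing its separating hyperplanes in a consistent orientation). Then the path is minimal (i.e., d(δ_0,δ_m) = Σ_{i=1}^m d(δ_{i-1},δ_i)) if and only if the sets of separating hyperplanes 𝓗(δ_{i-1},δ_i) are pairwise disjoint, if and only if their union over all i equals 𝓗(δ_0,δ_m). -/

import Mathlib

noncomputable section

variable {V : Type} [NormedAddCommGroup V] [NormedSpace ℝ V]

/-- A hyperplane arrangement: a set of affine hyperplanes, each encoded by a pair `(f, c)` of
a nonzero linear functional and a constant, the hyperplane being `{x | f x = c}`. -/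
def IsArrangement (𝓐 : Set ((V →ₗ[ℝ] ℝ) × ℝ)) : Prop :=
  ∀ H ∈ 𝓐, H.1 ≠ 0

/-- Local finiteness of the arrangement. -/
def LocallyFiniteArrangement (𝓐 : Set ((V →ₗ[ℝ] ℝ) × ℝ)) : Prop :=
  ∀ x : V, ∃ U ∈ nhds x, {H ∈ 𝓐 | ∃ y ∈ U, H.1 y = H.2}.Finite

/-- A point not lying on any hyperplane of the arrangement. -/
def OffArrangement (𝓐 : Set ((V →ₗ[ℝ] ℝ) × ℝ)) (x : V) : Prop :=
  ∀ H ∈ 𝓐, H.1 x ≠ H.2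

/-- `𝓗(δ, δ')`: the set of hyperplanes of `𝓐` separating `δ` and `δ'`. -/
def sepHyp (𝓐 : Set ((V →ₗ[ℝ] ℝ) × ℝ)) (x y : V) : Set ((V →ₗ[ℝ] ℝ) × ℝ) :=
  {H ∈ 𝓐 | (H.1 x - H.2) * (H.1 y - H.2) < 0}

/-- Let `δ_0, …, δ_m` be points off a locally finite arrangement forming a
positive path (each step `δ_{i-1} → δ_i` crosses at least one wall, with a generic label
`ℓ_i` oriented consistently with `δ_i - δ_{i-1}` on every hyperplane separating `δ_{i-1}`
and `δ_i`).  Then the path is minimal, i.e.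
`d(δ_0, δ_m) = Σ_{i=1}^m d(δ_{i-1}, δ_i)`, if and only if the separating sets
`𝓗(δ_{i-1}, δ_i)` are pairwise disjoint, if and only if
`𝓗(δ_0, δ_m)` equals their (disjoint) union. -/
private lemma aux_pos_chain (s : ℕ → ℝ) (h0 : s 0 ≠ 0) :
    ∀ m : ℕ, (∀ i < m, 0 < s i * s (i + 1)) → 0 < s 0 * s m := by
  intro m
  induction m with
  | zero => intro _; exact mul_self_pos.2 h0
  | succ n ih =>
    intro h
    have h1 := ih (fun i hi => h i (Nat.lt_succ_of_lt hi))
    have h2 := h n (Nat.lt_succ_self n)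
    nlinarith [mul_pos h1 h2, sq_nonneg (s n)]

private lemma aux_neg_chain (s : ℕ → ℝ) (m k : ℕ) (hk : k < m)
    (hne : ∀ i, s i ≠ 0) (hneg : s k * s (k + 1) < 0)
    (hpos : ∀ i < m, i ≠ k → 0 < s i * s (i + 1)) : s 0 * s m < 0 := by
  have hA : 0 < s 0 * s k :=
    aux_pos_chain s (hne 0) k (fun i hi => hpos i (hi.trans hk) (Nat.ne_of_lt hi))
  have hB : 0 < s (k + 1) * s m := by
    have := aux_pos_chain (fun i => s (k + 1 + i)) (hne (k + 1)) (m - (k + 1))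
      (fun i hi => by
        have h1 : k + 1 + (i + 1) = (k + 1 + i) + 1 := by omega
        have h2 := hpos (k + 1 + i) (by omega) (by omega)
        simpa [h1] using h2)
    have h3 : k + 1 + (m - (k + 1)) = m := by omega
    simpa [h3] using this
  nlinarith [mul_pos hA hB, hneg]

private lemma sepHyp_finite {𝓐 : Set ((V →ₗ[ℝ] ℝ) × ℝ)}
    (hlf : LocallyFiniteArrangement 𝓐) (x y : V) : (sepHyp 𝓐 x y).Finite := by
  choose U hU hfin using hlf
  have hseg : IsCompact (segment ℝ x y) := by
    rw [segment_eq_image']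
    exact (isCompact_Icc (a := (0:ℝ)) (b := 1)).image (by fun_prop)
  obtain ⟨t, _, hcov⟩ := hseg.elim_nhds_subcover U (fun z _ => hU z)
  refine Set.Finite.subset (t.finite_toSet.biUnion fun z _ => hfin z) ?_
  rintro H ⟨hHA, hprod⟩
  set a := H.1 x - H.2 with ha
  set b := H.1 y - H.2 with hb
  have hcont : Continuous (fun θ : ℝ => a + θ * (b - a)) := by fun_prop
  have hex : ∃ θ ∈ Set.Icc (0:ℝ) 1, a + θ * (b - a) = 0 := by
    rcases mul_neg_iff.1 hprod with ⟨hpa, hnb⟩ | ⟨hna, hpb⟩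
    · have := intermediate_value_Icc' (zero_le_one (α := ℝ)) hcont.continuousOn
        (a := 0) (b := 1)
      have h0 : (0:ℝ) ∈ Set.Icc (a + 1 * (b - a)) (a + 0 * (b - a)) := by
        constructor <;> simp <;> linarith
      obtain ⟨θ, hθ, hθ0⟩ := this h0
      exact ⟨θ, hθ, hθ0⟩
    · have := intermediate_value_Icc (zero_le_one (α := ℝ)) hcont.continuousOn
        (a := 0) (b := 1)
      have h0 : (0:ℝ) ∈ Set.Icc (a + 0 * (b - a)) (a + 1 * (b - a)) := by
        constructor <;> simp <;> linarith
      obtain ⟨θ, hθ, hθ0⟩ := this h0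
      exact ⟨θ, hθ, hθ0⟩
  obtain ⟨θ, hθ, hθ0⟩ := hex
  set p := x + θ • (y - x) with hp
  have hpseg : p ∈ segment ℝ x y := by
    rw [segment_eq_image']
    exact ⟨θ, hθ, rfl⟩
  have hHp : H.1 p = H.2 := by
    have h1 : H.1 p - H.2 = a + θ * (b - a) := by
      simp only [hp, map_add, map_smul, map_sub, smul_eq_mul, ha, hb]; ring
    have h2 := h1.trans hθ0
    linarith
  obtain ⟨z, hz, hpz⟩ := Set.mem_iUnion₂.mp (hcov hpseg)
  exact Set.mem_biUnion hz ⟨hHA, p, hpz, hHp⟩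

private lemma aux_ncard_iUnion_le {α : Type*} {m : ℕ} (A : Fin m → Set α)
    (hA : ∀ i, (A i).Finite) : (⋃ i, A i).ncard ≤ ∑ i, (A i).ncard := by
  classical
  have h1 : (⋃ i, A i) = ↑(Finset.univ.biUnion fun i => (hA i).toFinset) := by
    ext x; simp
  rw [h1, Set.ncard_coe_finset]
  calc (Finset.univ.biUnion fun i => (hA i).toFinset).card
      ≤ ∑ i, ((hA i).toFinset).card := Finset.card_biUnion_le
    _ = ∑ i, (A i).ncard :=
      Finset.sum_congr rfl fun i _ => (Set.ncard_eq_toFinset_card _ (hA i)).symm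

private lemma aux_ncard_iUnion_eq {α : Type*} {m : ℕ} (A : Fin m → Set α)
    (hA : ∀ i, (A i).Finite)
    (hdisj : ∀ i j, i ≠ j → Disjoint (A i) (A j)) :
    (⋃ i, A i).ncard = ∑ i, (A i).ncard := by
  classical
  have h1 : (⋃ i, A i) = ↑(Finset.univ.biUnion fun i => (hA i).toFinset) := by
    ext x; simp
  rw [h1, Set.ncard_coe_finset]
  rw [Finset.card_biUnion (fun i _ j _ hij =>
    Set.Finite.disjoint_toFinset.2 (hdisj i j hij))]
  exact Finset.sum_congr rfl fun i _ => ((Set.ncard_eq_toFinset_card _ (hA i))).symm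

open Fin.NatCast

theorem statement9 (𝓐 : Set ((V →ₗ[ℝ] ℝ) × ℝ)) (h𝓐 : IsArrangement 𝓐)
    (hlf : LocallyFiniteArrangement 𝓐)
    (m : ℕ) (δ : Fin (m + 1) → V) (ℓ : Fin m → V)
    (hoff : ∀ i, OffArrangement 𝓐 (δ i))
    (hgen : ∀ i, ∀ H ∈ 𝓐, H.1 (ℓ i) ≠ 0)
    (hpos : ∀ i : Fin m, (sepHyp 𝓐 (δ i.castSucc) (δ i.succ)).Nonempty ∧
      ∀ H ∈ sepHyp 𝓐 (δ i.castSucc) (δ i.succ),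
        0 < H.1 (ℓ i) * (H.1 (δ i.succ) - H.1 (δ i.castSucc))) :
    ((sepHyp 𝓐 (δ 0) (δ (Fin.last m))).ncard =
        ∑ i : Fin m, (sepHyp 𝓐 (δ i.castSucc) (δ i.succ)).ncard ↔
      ∀ i j : Fin m, i ≠ j →
        Disjoint (sepHyp 𝓐 (δ i.castSucc) (δ i.succ))
          (sepHyp 𝓐 (δ j.castSucc) (δ j.succ))) ∧
    ((sepHyp 𝓐 (δ 0) (δ (Fin.last m))).ncard =
        ∑ i : Fin m, (sepHyp 𝓐 (δ i.castSucc) (δ i.succ)).ncard ↔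
      (sepHyp 𝓐 (δ 0) (δ (Fin.last m)) =
          ⋃ i : Fin m, sepHyp 𝓐 (δ i.castSucc) (δ i.succ)) ∧
        ∀ i j : Fin m, i ≠ j →
          Disjoint (sepHyp 𝓐 (δ i.castSucc) (δ i.succ))
            (sepHyp 𝓐 (δ j.castSucc) (δ j.succ))) := by
  classical
  set S : Fin m → Set ((V →ₗ[ℝ] ℝ) × ℝ) :=
    fun i => sepHyp 𝓐 (δ i.castSucc) (δ i.succ) with hSdef
  set T : Set ((V →ₗ[ℝ] ℝ) × ℝ) := sepHyp 𝓐 (δ 0) (δ (Fin.last m)) with hTdef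
  have hSfin : ∀ i, (S i).Finite := fun i => sepHyp_finite hlf _ _
  have hTfin : T.Finite := sepHyp_finite hlf _ _
  -- casting lemmas
  have hc : ∀ i : Fin m, (((i : ℕ)) : Fin (m + 1)) = i.castSucc := by
    intro i
    have : (i : ℕ) < m + 1 := i.isLt.trans (Nat.lt_succ_self m)
    ext
    simp [Fin.val_natCast, Nat.mod_eq_of_lt this]
  have hc' : ∀ i : Fin m, (((i : ℕ) + 1 : ℕ) : Fin (m + 1)) = i.succ := by
    intro i
    have : (i : ℕ) + 1 < m + 1 := Nat.succ_lt_succ i.isLt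
    ext
    simp [Fin.val_natCast, Nat.mod_eq_of_lt this]
  have hc0 : ((0 : ℕ) : Fin (m + 1)) = 0 := by simp
  have hcm : ((m : ℕ) : Fin (m + 1)) = Fin.last m := Fin.natCast_eq_last m
  -- membership in S i
  have hmemS : ∀ (H : (V →ₗ[ℝ] ℝ) × ℝ) (i : Fin m), H ∈ S i ↔
      H ∈ 𝓐 ∧ (H.1 (δ i.castSucc) - H.2) * (H.1 (δ i.succ) - H.2) < 0 := by
    intro H i; rfl
  have hmemT : ∀ (H : (V →ₗ[ℝ] ℝ) × ℝ), H ∈ T ↔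
      H ∈ 𝓐 ∧ (H.1 (δ 0) - H.2) * (H.1 (δ (Fin.last m)) - H.2) < 0 := by
    intro H; rfl
  -- Fact 1 : T ⊆ ⋃ S i
  have hsubU : T ⊆ ⋃ i, S i := by
    intro H hH
    rw [hmemT] at hH
    obtain ⟨hHA, hprod⟩ := hH
    by_contra hnot
    simp only [Set.mem_iUnion, not_exists] at hnot
    set s : ℕ → ℝ := fun n => H.1 (δ n) - H.2 with hsdef
    have hsne : ∀ n, s n ≠ 0 := fun n => sub_ne_zero.2 (hoff _ H hHA)
    have hstep : ∀ i < m, 0 < s i * s (i + 1) := by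
      intro i hi
      have hnS := hnot ⟨i, hi⟩
      rw [hmemS] at hnS
      have heq : s i * s (i + 1) =
          (H.1 (δ (⟨i, hi⟩ : Fin m).castSucc) - H.2) *
          (H.1 (δ (⟨i, hi⟩ : Fin m).succ) - H.2) := by
        simp only [hsdef]
        rw [show ((i : ℕ) : Fin (m+1)) = (⟨i, hi⟩ : Fin m).castSucc from hc ⟨i, hi⟩,
          show (((i : ℕ) + 1 : ℕ) : Fin (m+1)) = (⟨i, hi⟩ : Fin m).succ from hc' ⟨i, hi⟩]
      rw [heq]
      rcases lt_trichotomy ((H.1 (δ (⟨i, hi⟩ : Fin m).castSucc) - H.2) *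
          (H.1 (δ (⟨i, hi⟩ : Fin m).succ) - H.2)) 0 with h | h | h
      · exact absurd ⟨hHA, h⟩ hnS
      · exact absurd h (mul_ne_zero (sub_ne_zero.2 (hoff _ H hHA))
          (sub_ne_zero.2 (hoff _ H hHA)))
      · exact h
    have := aux_pos_chain s (hsne 0) m hstep
    rw [hsdef] at this
    simp only [hc0, hcm] at this
    linarith
  -- Fact 2 : disjoint → ⋃ S i ⊆ T
  have hUsub : (∀ i j : Fin m, i ≠ j → Disjoint (S i) (S j)) → (⋃ i, S i) ⊆ T := by
    intro hdisj H hH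
    obtain ⟨i, hHi⟩ := Set.mem_iUnion.1 hH
    have hHA : H ∈ 𝓐 := ((hmemS H i).1 hHi).1
    set s : ℕ → ℝ := fun n => H.1 (δ n) - H.2 with hsdef
    have hsne : ∀ n, s n ≠ 0 := fun n => sub_ne_zero.2 (hoff _ H hHA)
    have hstepeq : ∀ j : Fin m, s (j : ℕ) * s ((j : ℕ) + 1) =
        (H.1 (δ j.castSucc) - H.2) * (H.1 (δ j.succ) - H.2) := by
      intro j; simp only [hsdef]; rw [hc j, hc' j]
    have hneg : s (i : ℕ) * s ((i : ℕ) + 1) < 0 := by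
      rw [hstepeq i]; exact ((hmemS H i).1 hHi).2
    have hpos' : ∀ n < m, n ≠ (i : ℕ) → 0 < s n * s (n + 1) := by
      intro n hn hni
      have hne' : (⟨n, hn⟩ : Fin m) ≠ i := by
        intro h; apply hni; rw [← h]
      have hnS : H ∉ S ⟨n, hn⟩ :=
        fun hmem => (Set.disjoint_left.1 (hdisj _ _ hne') hmem) hHi
      rw [hmemS] at hnS
      have heq := hstepeq ⟨n, hn⟩
      rcases lt_trichotomy (s n * s (n + 1)) 0 with h | h | h
      · exfalso; apply hnS; exact ⟨hHA, by rw [← heq]; exact h⟩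
      · exact absurd h (mul_ne_zero (hsne n) (hsne (n + 1)))
      · exact h
    have := aux_neg_chain s m (i : ℕ) i.isLt hsne hneg hpos'
    rw [hmemT]
    refine ⟨hHA, ?_⟩
    rw [hsdef] at this
    simp only [hc0, hcm] at this
    exact this
  -- core iff : ncard equality ↔ pairwise disjoint
  have hcore : T.ncard = ∑ i, (S i).ncard ↔
      ∀ i j : Fin m, i ≠ j → Disjoint (S i) (S j) := by
    constructor
    · intro hcard
      by_contra hnd
      push_neg at hnd
      obtain ⟨i, j, hij, hndij⟩ := hnd
      obtain ⟨H, hHi, hHj⟩ := Set.not_disjoint_iff.1 hndij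
      set S' : Fin m → Set ((V →ₗ[ℝ] ℝ) × ℝ) :=
        fun k => if k = j then S j \ {H} else S k with hS'def
      have hS'fin : ∀ k, (S' k).Finite := by
        intro k
        by_cases h : k = j <;> simp [hS'def, h, (hSfin j).diff, hSfin k]
      have hTsub' : T ⊆ ⋃ k, S' k := by
        intro x hx
        obtain ⟨k, hk⟩ := Set.mem_iUnion.1 (hsubU hx)
        by_cases hkj : k = j
        · subst hkj
          by_cases hxH : x = H
          · subst hxH
            exact Set.mem_iUnion.2 ⟨i, by simp [hS'def, hij, hHi]⟩
          · exact Set.mem_iUnion.2 ⟨k, by simp [hS'def, hk, hxH]⟩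
        · exact Set.mem_iUnion.2 ⟨k, by simp [hS'def, hkj, hk]⟩
      have h1 : T.ncard ≤ ∑ k, (S' k).ncard :=
        le_trans (Set.ncard_le_ncard hTsub' (Set.finite_iUnion hS'fin))
          (aux_ncard_iUnion_le S' hS'fin)
      have h2 : ∑ k, (S' k).ncard < ∑ k, (S k).ncard := by
        have hle : ∀ k ∈ Finset.univ, (S' k).ncard ≤ (S k).ncard := by
          intro k _
          by_cases h : k = j
          · subst h
            simp only [hS'def, if_pos rfl]
            exact Set.ncard_le_ncard Set.diff_subset (hSfin k)
          · simp [hS'def, h]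
        have hlt : (S' j).ncard < (S j).ncard := by
          simp only [hS'def, if_pos rfl]
          exact Set.ncard_diff_singleton_lt_of_mem hHj (hSfin j)
        exact Finset.sum_lt_sum hle ⟨j, Finset.mem_univ j, hlt⟩
      omega
    · intro hdisj
      have hTeq : T = ⋃ i, S i := Set.Subset.antisymm hsubU (hUsub hdisj)
      rw [hTeq]
      exact aux_ncard_iUnion_eq S hSfin hdisj
  refine ⟨hcore, ?_⟩
  constructor
  · intro hcard
    have hdisj := hcore.1 hcard
    exact ⟨Set.Subset.antisymm hsubU (hUsub hdisj), hdisj⟩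
  · rintro ⟨_, hdisj⟩
    exact hcore.2 hdisj
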